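/- Let (Ω, 𝒜, P) be a probability space, H a positive natural number, and c_0, …, c_{H−1} : Ω → ℝ measurable random variables each taking values in {0, 1}. Set C_H = ∑_{t=0}^{H−1} c_t. Then for every λ > 0, P({ω : ∃ t < H, c_t(ω) = 1}) ≤ (1 − E[exp(−λ · C_H)]) / (1 − exp(−λ)). -/

import Mathlib

open MeasureTheory

/-- **Binary-violation chance bound.** If each per-step violation signal
`c t : Ω → ℝ` (for `t < H`) is measurable and `{0,1}`-valued, and
`C_H = ∑_{t<H} c t`, then for every `λ > 0`,
`P(∃ t < H, c t = 1) ≤ (1 − E[exp(−λ C_H)]) / (1 − exp(−λ))`. -/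
theorem chance_bound_binary
    {Ω : Type*} [MeasurableSpace Ω] (P : Measure Ω) [IsProbabilityMeasure P]
    (H : ℕ) (hH : 0 < H) (c : ℕ → Ω → ℝ)
    (hmeas : ∀ t < H, Measurable (c t))
    (hbin : ∀ t < H, ∀ ω, c t ω = 0 ∨ c t ω = 1)
    (lam : ℝ) (hlam : 0 < lam) :
    (P {ω | ∃ t < H, c t ω = 1}).toReal ≤
      (1 - ∫ ω, Real.exp (-lam * ∑ t ∈ Finset.range H, c t ω) ∂P) /
        (1 - Real.exp (-lam)) := by
  set A : Set Ω := {ω | ∃ t < H, c t ω = 1} with hA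
  have hAmeas : MeasurableSet A := by
    have : A = ⋃ t ∈ Finset.range H, {ω | c t ω = 1} := by
      ext ω; simp [hA]
    rw [this]
    exact Finset.measurableSet_biUnion _ fun t ht =>
      (hmeas t (Finset.mem_range.mp ht)) (measurableSet_singleton 1)
  set f : Ω → ℝ := fun ω => Real.exp (-lam * ∑ t ∈ Finset.range H, c t ω) with hf
  have hfmeas : Measurable f := by
    apply Real.measurable_exp.comp
    exact (measurable_const.mul
      (Finset.measurable_sum _ fun t ht => hmeas t (Finset.mem_range.mp ht)))
  have hfnonneg : ∀ ω, 0 ≤ f ω := fun ω => (Real.exp_pos _).le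
  have hfle : ∀ ω, f ω ≤ 1 := by
    intro ω
    rw [hf]
    have hsum : 0 ≤ ∑ t ∈ Finset.range H, c t ω := by
      apply Finset.sum_nonneg
      intro t ht
      rcases hbin t (Finset.mem_range.mp ht) ω with h | h <;> simp [h]
    calc Real.exp (-lam * ∑ t ∈ Finset.range H, c t ω) ≤ Real.exp 0 := by
          apply Real.exp_le_exp.mpr
          have := mul_nonneg hlam.le hsum
          nlinarith
      _ = 1 := Real.exp_zero
  have hfint : Integrable f P := by
    apply Integrable.mono' (integrable_const 1) hfmeas.aestronglyMeasurable
    filter_upwards with ω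
    rw [Real.norm_eq_abs, abs_of_nonneg (hfnonneg ω)]
    exact hfle ω
  set g : Ω → ℝ := fun ω => 1 - (1 - Real.exp (-lam)) * A.indicator (fun _ => (1:ℝ)) ω
    with hg
  have hgint : Integrable g P := by
    apply Integrable.sub (integrable_const 1)
    exact ((integrable_indicator_iff hAmeas).mpr
      ((integrableOn_const_iff (C := (1:ℝ))).mpr (Or.inr (measure_lt_top _ _)))).const_mul _
  have hfg : ∀ ω, f ω ≤ g ω := by
    intro ω
    by_cases hω : ω ∈ A
    · obtain ⟨t, htH, hct⟩ := Set.mem_setOf_eq ▸ hω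
      have hsum : 1 ≤ ∑ s ∈ Finset.range H, c s ω := by
        have := Finset.single_le_sum (f := fun s => c s ω)
          (fun s hs => by rcases hbin s (Finset.mem_range.mp hs) ω with h | h <;> simp [h])
          (Finset.mem_range.mpr htH)
        simpa [hct] using this
      have : f ω ≤ Real.exp (-lam) := by
        rw [hf]
        apply Real.exp_le_exp.mpr
        nlinarith
      simp only [hg, Set.indicator_of_mem hω]
      linarith
    · have hzero : ∀ t ∈ Finset.range H, c t ω = 0 := by
        intro t ht
        rcases hbin t (Finset.mem_range.mp ht) ω with h | h
        · exact h
        · exact absurd ⟨t, Finset.mem_range.mp ht, h⟩ hω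
      simp only [hg, Set.indicator_of_notMem hω]
      rw [hf]
      simp [Finset.sum_eq_zero hzero]
  have hint_le : ∫ ω, f ω ∂P ≤ ∫ ω, g ω ∂P :=
    integral_mono hfint hgint hfg
  have hintg : ∫ ω, g ω ∂P = 1 - (1 - Real.exp (-lam)) * (P A).toReal := by
    rw [hg]
    rw [integral_sub (integrable_const 1)
      (((integrable_indicator_iff hAmeas).mpr
        ((integrableOn_const_iff (C := (1:ℝ))).mpr (Or.inr (measure_lt_top _ _)))).const_mul _)]
    rw [integral_const, integral_const_mul, integral_indicator hAmeas]
    simp [Measure.real]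
  have hpos : 0 < 1 - Real.exp (-lam) := by
    have : Real.exp (-lam) < 1 := by
      rw [Real.exp_lt_one_iff]; linarith
    linarith
  rw [le_div_iff₀ hpos]
  rw [hintg] at hint_le
  nlinarith [hint_le]
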